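/- Suppose strictly positive measures αᵢ : [A] → ℝ>0 satisfy for each player i: ℓᵢ(a) + (1/λᵢ) log αᵢ(a) + σᵢ = 0 for all a ∈ [A] (for some constants σᵢ), and let y = α₁ ∘ ⋯ ∘ α_N be a probability distribution. Then for every player i and actions aᵢ, âᵢ ∈ [Aᵢ]: ∑_{a₋ᵢ} y(aᵢ, a₋ᵢ)(ℓᵢ(aᵢ,a₋ᵢ) − ℓᵢ(âᵢ,a₋ᵢ)) ≤ εᵢ/λᵢ, where εᵢ = max_{a,â ∈ [A]} log(αᵢ(a)/αᵢ(â)). That is, y is an ε-correlated equilibrium with ε = maxᵢ εᵢ/λᵢ. -/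
import Mathlib


/-- Combine player `i`'s action `b` with the opponents' action profile `c`
into a joint action. -/
def combine {N : ℕ} {A : Fin N → Type*} (i : Fin N) (b : A i)
    (c : ∀ j : {j : Fin N // j ≠ i}, A j.1) : ∀ j, A j :=
  fun j => if h : j = i then cast (congrArg A h).symm b else c ⟨j, h⟩

/-- Strictly positive measures satisfying the stationarity equations whose
product is a probability distribution form an ε-correlated equilibrium, with
`εᵢ = max_{a,â} log(αᵢ(a)/αᵢ(â))`. -/
theorem stationary_measures_eps_correlated {N : ℕ} {A : Fin N → Type*}
    [∀ i, Fintype (A i)] [∀ i, Nonempty (A i)]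
    (ℓ : ∀ _ : Fin N, (∀ j, A j) → ℝ)
    (α : ∀ _ : Fin N, (∀ j, A j) → ℝ)
    (lam : Fin N → ℝ) (hlam : ∀ i, 0 < lam i)
    (hpos : ∀ i a, 0 < α i a)
    (σ : Fin N → ℝ)
    (hstat : ∀ i a, ℓ i a + (1 / lam i) * Real.log (α i a) + σ i = 0)
    (hy1 : ∑ a, ∏ i, α i a = 1) :
    ∀ i, ∀ ai ahat : A i,
      ∑ c : ∀ j : {j : Fin N // j ≠ i}, A j.1,
          (∏ j, α j (combine i ai c)) *
            (ℓ i (combine i ai c) - ℓ i (combine i ahat c))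
        ≤ (Finset.univ.sup' Finset.univ_nonempty
            (fun p : (∀ j, A j) × (∀ j, A j) =>
              Real.log (α i p.1 / α i p.2))) / lam i := by
  intro i ai ahat
  set ε := Finset.univ.sup' Finset.univ_nonempty
      (fun p : (∀ j, A j) × (∀ j, A j) => Real.log (α i p.1 / α i p.2)) with hε
  classical
  have hεnn : 0 ≤ ε := by
    have a : ∀ j, A j := Classical.arbitrary _
    have h := Finset.le_sup' (b := (a, a))
        (f := fun p : (∀ j, A j) × (∀ j, A j) => Real.log (α i p.1 / α i p.2))
        (Finset.mem_univ (a, a))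
    rw [← hε, div_self (hpos i a).ne', Real.log_one] at h
    exact h
  have hdiff : ∀ c, ℓ i (combine i ai c) - ℓ i (combine i ahat c) ≤ ε / lam i := by
    intro c
    have h1 := hstat i (combine i ai c)
    have h2 := hstat i (combine i ahat c)
    have e1 : ℓ i (combine i ai c)
        = -σ i - (1 / lam i) * Real.log (α i (combine i ai c)) := by linarith
    have e2 : ℓ i (combine i ahat c)
        = -σ i - (1 / lam i) * Real.log (α i (combine i ahat c)) := by linarith
    have hL : ℓ i (combine i ai c) - ℓ i (combine i ahat c)
        = Real.log (α i (combine i ahat c) / α i (combine i ai c)) / lam i := by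
      rw [e1, e2, Real.log_div (hpos i _).ne' (hpos i _).ne']
      field_simp
      ring
    rw [hL]
    have hle : Real.log (α i (combine i ahat c) / α i (combine i ai c)) ≤ ε := by
      rw [hε]
      exact Finset.le_sup'
        (f := fun p : (∀ j, A j) × (∀ j, A j) => Real.log (α i p.1 / α i p.2))
        (Finset.mem_univ (combine i ahat c, combine i ai c))
    exact div_le_div_of_nonneg_right hle (hlam i).le
  have hinj : Function.Injective (combine i ai) := by
    intro c c' h
    funext j
    have hj := congrFun h j.1
    simpa [combine, j.2] using hj
  have hsum : ∑ c, ∏ j, α j (combine i ai c) ≤ 1 := by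
    rw [← hy1]
    calc ∑ c, ∏ j, α j (combine i ai c)
        = ∑ a ∈ Finset.univ.image (combine i ai), ∏ j, α j a :=
          (Finset.sum_image (g := combine i ai) (f := fun a => ∏ j, α j a) (fun x _ y _ h => hinj h)).symm
      _ ≤ ∑ a, ∏ j, α j a :=
          Finset.sum_le_sum_of_subset_of_nonneg (Finset.subset_univ _)
            (fun a _ _ => Finset.prod_nonneg fun j _ => (hpos j a).le)
  calc ∑ c, (∏ j, α j (combine i ai c)) * (ℓ i (combine i ai c) - ℓ i (combine i ahat c))
      ≤ ∑ c, (∏ j, α j (combine i ai c)) * (ε / lam i) := by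
        refine Finset.sum_le_sum fun c _ => ?_
        exact mul_le_mul_of_nonneg_left (hdiff c)
          (Finset.prod_nonneg fun j _ => (hpos j _).le)
    _ = (∑ c, ∏ j, α j (combine i ai c)) * (ε / lam i) := (Finset.sum_mul _ _ _).symm
    _ ≤ 1 * (ε / lam i) :=
        mul_le_mul_of_nonneg_right hsum (div_nonneg hεnn (hlam i).le)
    _ = ε / lam i := one_mul _
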